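/- Let u₀(x) = √(a/(2π)) e^{−a(x−m)²/2} with a > 0, m ∈ ℝ. Then for all t > 0, the explicit solution of the replicator-mutator equation is the Gaussian u(t,x) = √(a(t)/(2π)) e^{−a(t)(x−m(t))²/2}, where a(t) = a/(1+2at) and m(t) = m + t² + t/a. -/
import Mathlib


open Real MeasureTheory Set

lemma integral_rexp_quadratic' (b c d : ℝ) (hb : 0 < b) :
    ∫ x : ℝ, Real.exp (-b * x ^ 2 + c * x + d)
      = Real.sqrt (Real.pi / b) * Real.exp (d + c ^ 2 / (4 * b)) := by
  have h : ∀ x : ℝ, -b * x ^ 2 + c * x + d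
      = -b * (x - c / (2 * b)) ^ 2 + (d + c ^ 2 / (4 * b)) := by
    intro x; field_simp; ring
  simp_rw [h, Real.exp_add, integral_mul_const]
  rw [integral_sub_right_eq_self (fun x => Real.exp (-b * x ^ 2)) (c / (2 * b)),
    integral_gaussian]

theorem gaussian_propagation (a m : ℝ) (ha : 0 < a) (t x : ℝ) (ht : 0 < t) :
    Real.exp (t * x) *
        (∫ y : ℝ, (Real.sqrt (4 * Real.pi * t))⁻¹ *
          Real.exp (-(x + t ^ 2 - y) ^ 2 / (4 * t)) *
          (Real.sqrt (a / (2 * Real.pi)) * Real.exp (-a * (y - m) ^ 2 / 2))) /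
        (∫ y : ℝ, Real.exp (t * y) *
          (Real.sqrt (a / (2 * Real.pi)) * Real.exp (-a * (y - m) ^ 2 / 2)))
    = Real.sqrt ((a / (1 + 2 * a * t)) / (2 * Real.pi)) *
        Real.exp (-(a / (1 + 2 * a * t)) * (x - (m + t ^ 2 + t / a)) ^ 2 / 2) := by
  have hpi := Real.pi_pos
  have h1 : (0:ℝ) < 1 + 2 * a * t := by positivity
  have hb : (0:ℝ) < 1 / (4 * t) + a / 2 := by positivity
  -- rewrite numerator integrand
  have hnum : ∀ y : ℝ, (Real.sqrt (4 * Real.pi * t))⁻¹ *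
      Real.exp (-(x + t ^ 2 - y) ^ 2 / (4 * t)) *
      (Real.sqrt (a / (2 * Real.pi)) * Real.exp (-a * (y - m) ^ 2 / 2))
      = ((Real.sqrt (4 * Real.pi * t))⁻¹ * Real.sqrt (a / (2 * Real.pi))) *
        Real.exp (-(1 / (4 * t) + a / 2) * y ^ 2 + ((x + t ^ 2) / (2 * t) + a * m) * y
          + (-(x + t ^ 2) ^ 2 / (4 * t) - a * m ^ 2 / 2)) := by
    intro y
    have hexp : -(x + t ^ 2 - y) ^ 2 / (4 * t) + -a * (y - m) ^ 2 / 2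
        = -(1 / (4 * t) + a / 2) * y ^ 2 + ((x + t ^ 2) / (2 * t) + a * m) * y
          + (-(x + t ^ 2) ^ 2 / (4 * t) - a * m ^ 2 / 2) := by
      field_simp; ring
    calc (Real.sqrt (4 * Real.pi * t))⁻¹ *
        Real.exp (-(x + t ^ 2 - y) ^ 2 / (4 * t)) *
        (Real.sqrt (a / (2 * Real.pi)) * Real.exp (-a * (y - m) ^ 2 / 2))
        = ((Real.sqrt (4 * Real.pi * t))⁻¹ * Real.sqrt (a / (2 * Real.pi))) *
          (Real.exp (-(x + t ^ 2 - y) ^ 2 / (4 * t)) * Real.exp (-a * (y - m) ^ 2 / 2)) := by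
          ring
      _ = _ := by rw [← Real.exp_add, hexp]
  -- rewrite denominator integrand
  have hden : ∀ y : ℝ, Real.exp (t * y) *
      (Real.sqrt (a / (2 * Real.pi)) * Real.exp (-a * (y - m) ^ 2 / 2))
      = Real.sqrt (a / (2 * Real.pi)) *
        Real.exp (-(a / 2) * y ^ 2 + (t + a * m) * y + (-(a * m ^ 2) / 2)) := by
    intro y
    have hexp : t * y + -a * (y - m) ^ 2 / 2
        = -(a / 2) * y ^ 2 + (t + a * m) * y + (-(a * m ^ 2) / 2) := by ring
    calc Real.exp (t * y) *
        (Real.sqrt (a / (2 * Real.pi)) * Real.exp (-a * (y - m) ^ 2 / 2))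
        = Real.sqrt (a / (2 * Real.pi)) *
          (Real.exp (t * y) * Real.exp (-a * (y - m) ^ 2 / 2)) := by ring
      _ = _ := by rw [← Real.exp_add, hexp]
  simp only [hnum, hden]
  rw [MeasureTheory.integral_const_mul, MeasureTheory.integral_const_mul,
    integral_rexp_quadratic' _ _ _ hb, integral_rexp_quadratic' _ _ _ (by positivity : (0:ℝ) < a / 2)]
  set D1 : ℝ := -(x + t ^ 2) ^ 2 / (4 * t) - a * m ^ 2 / 2
    + ((x + t ^ 2) / (2 * t) + a * m) ^ 2 / (4 * (1 / (4 * t) + a / 2)) with hD1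
  set D2 : ℝ := -(a * m ^ 2) / 2 + (t + a * m) ^ 2 / (4 * (a / 2)) with hD2
  have hS : ((Real.sqrt (4 * Real.pi * t))⁻¹ * Real.sqrt (a / (2 * Real.pi))) *
      Real.sqrt (Real.pi / (1 / (4 * t) + a / 2))
      = Real.sqrt ((a / (1 + 2 * a * t)) / (2 * Real.pi)) *
        (Real.sqrt (a / (2 * Real.pi)) * Real.sqrt (Real.pi / (a / 2))) := by
    rw [← Real.sqrt_inv, ← Real.sqrt_mul (by positivity), ← Real.sqrt_mul (by positivity),
      ← Real.sqrt_mul (by positivity), ← Real.sqrt_mul (by positivity)]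
    congr 1
    field_simp
    ring
  have hE : Real.exp (t * x) * Real.exp D1
      = Real.exp (-(a / (1 + 2 * a * t)) * (x - (m + t ^ 2 + t / a)) ^ 2 / 2) * Real.exp D2 := by
    rw [← Real.exp_add, ← Real.exp_add]
    congr 1
    rw [hD1, hD2]
    field_simp
    ring
  have hden0 : Real.sqrt (a / (2 * Real.pi)) *
      (Real.sqrt (Real.pi / (a / 2)) * Real.exp D2) ≠ 0 := by positivity
  rw [div_eq_iff hden0]
  calc Real.exp (t * x) * ((Real.sqrt (4 * Real.pi * t))⁻¹ * Real.sqrt (a / (2 * Real.pi)) *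
        (Real.sqrt (Real.pi / (1 / (4 * t) + a / 2)) * Real.exp D1))
      = (((Real.sqrt (4 * Real.pi * t))⁻¹ * Real.sqrt (a / (2 * Real.pi))) *
          Real.sqrt (Real.pi / (1 / (4 * t) + a / 2))) * (Real.exp (t * x) * Real.exp D1) := by
        ring
    _ = (Real.sqrt ((a / (1 + 2 * a * t)) / (2 * Real.pi)) *
          (Real.sqrt (a / (2 * Real.pi)) * Real.sqrt (Real.pi / (a / 2)))) *
        (Real.exp (-(a / (1 + 2 * a * t)) * (x - (m + t ^ 2 + t / a)) ^ 2 / 2) *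
          Real.exp D2) := by
        rw [hS, hE]
    _ = _ := by ring
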